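/- If the phases of A and B are both sufficiently small in magnitude, then I + AB is nonsingular: let α₁ ≤ β₁ and α₂ ≤ β₂ be reals with β₁ − α₁ < π, β₂ − α₂ < π, β₁ + β₂ < π, and α₁ + α₂ > −π, and let A, B ∈ Matrix (Fin n) (Fin n) ℂ satisfy star x ⬝ᵥ A.mulVec x ∈ S[α₁,β₁] and star x ⬝ᵥ B.mulVec x ∈ S[α₂,β₂] for every unit vector x ∈ EuclideanSpace ℂ (Fin n). Then det(1 + A * B) ≠ 0. -/

import Mathlib

open Matrix
open scoped Real

/-- The sector of complex numbers with phase in `[α, β]`. -/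
def sector (α β : ℝ) : Set ℂ :=
  {z : ℂ | ∃ r > (0 : ℝ), ∃ θ ∈ Set.Icc α β, z = (r : ℂ) * Complex.exp ((θ : ℂ) * Complex.I)}

lemma cos_gt_neg_one {s : ℝ} (h1 : -π < s) (h2 : s < π) : -1 < Real.cos s := by
  have hc : 0 < Real.cos (s/2) :=
    Real.cos_pos_of_mem_Ioo ⟨by linarith, by linarith⟩
  have h := Real.cos_sq (s/2)
  have : 2 * (s/2) = s := by ring
  rw [this] at h
  nlinarith

lemma sector_key {α₁ β₁ α₂ β₂ : ℝ} (hsum : β₁ + β₂ < π) (hsum' : -π < α₁ + α₂)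
    {a b : ℂ} (ha : a ∈ sector α₁ β₁) (hb : b ∈ sector α₂ β₂)
    {t : ℝ} (ht : 0 < t) (h : a = -(t : ℂ) * (starRingEnd ℂ) b) : False := by
  obtain ⟨r₁, hr₁, θ₁, hθ₁, rfl⟩ := ha
  obtain ⟨r₂, hr₂, θ₂, hθ₂, rfl⟩ := hb
  have hconj : (starRingEnd ℂ) ((r₂ : ℂ) * Complex.exp ((θ₂ : ℂ) * Complex.I))
      = (r₂ : ℂ) * Complex.exp (-((θ₂ : ℂ) * Complex.I)) := by
    rw [_root_.map_mul, ← Complex.exp_conj]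
    simp [Complex.conj_ofReal, mul_comm]
  rw [hconj] at h
  have he : Complex.exp ((θ₂ : ℂ) * Complex.I) * Complex.exp (-((θ₂ : ℂ) * Complex.I)) = 1 := by
    rw [← Complex.exp_add]; simp
  have key : (r₁ : ℂ) * Complex.exp (((θ₁ + θ₂ : ℝ) : ℂ) * Complex.I) = -((t * r₂ : ℝ) : ℂ) := by
    push_cast
    rw [add_mul, Complex.exp_add]
    linear_combination Complex.exp ((θ₂ : ℂ) * Complex.I) * h - ((t : ℂ) * (r₂ : ℂ)) * he
  set s : ℝ := θ₁ + θ₂ with hs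
  -- abs
  have habs : r₁ = t * r₂ := by
    have := congrArg (fun z : ℂ => ‖z‖) key
    simpa [Complex.norm_exp_ofReal_mul_I, abs_of_pos hr₁, abs_of_pos ht, abs_of_pos hr₂] using this
  -- re
  have hre : r₁ * Real.cos s = -(t * r₂) := by
    have := congrArg Complex.re key
    simpa [Complex.exp_ofReal_mul_I_re] using this
  have hcos : -1 < Real.cos s := by
    exact cos_gt_neg_one (by linarith [hθ₁.1, hθ₂.1]) (by linarith [hθ₁.2, hθ₂.2])
  nlinarith

lemma normalized_sector {n : ℕ} {α β : ℝ} (C : Matrix (Fin n) (Fin n) ℂ)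
    (hC : ∀ x : EuclideanSpace ℂ (Fin n), ‖x‖ = 1 → star x ⬝ᵥ C.mulVec x ∈ sector α β)
    (y : Fin n → ℂ) (hy : y ≠ 0) :
    ∃ c : ℝ, 0 < c ∧ ((c : ℂ)) * (star y ⬝ᵥ C.mulVec y) ∈ sector α β := by
  set yE : EuclideanSpace ℂ (Fin n) := (WithLp.equiv 2 (Fin n → ℂ)).symm y with hyE
  have hyE0 : yE ≠ 0 := by
    simpa [hyE] using hy
  have hnorm : ‖yE‖ ≠ 0 := norm_ne_zero_iff.mpr hyE0
  have hnormpos : 0 < ‖yE‖ := norm_pos_iff.mpr hyE0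
  set u : EuclideanSpace ℂ (Fin n) := ((‖yE‖⁻¹ : ℝ) : ℂ) • yE with hu
  have hun : ‖u‖ = 1 := by
    rw [hu, norm_smul]
    simp [abs_of_pos (inv_pos.mpr hnormpos), inv_mul_cancel₀ hnorm]
  have hmem := hC u hun
  refine ⟨(‖yE‖⁻¹)^2, by positivity, ?_⟩
  have huy : (u : Fin n → ℂ) = ((‖yE‖⁻¹ : ℝ) : ℂ) • y := rfl
  have : star u ⬝ᵥ C.mulVec u = ((‖yE‖⁻¹ : ℝ)^2 : ℂ) * (star y ⬝ᵥ C.mulVec y) := by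
    rw [huy, star_smul, Matrix.mulVec_smul, smul_dotProduct, dotProduct_smul]
    simp [smul_smul, Complex.conj_ofReal]
    push_cast
    ring
  rw [this] at hmem
  convert hmem using 2
  push_cast
  ring

/-- If the phases of `A` and `B` are both sufficiently small in magnitude, then
`I + A * B` is nonsingular. -/
theorem det_one_add_mul_ne_zero_of_small_phases {n : ℕ} (α₁ β₁ α₂ β₂ : ℝ)
    (h₁ : α₁ ≤ β₁) (h₂ : α₂ ≤ β₂) (hw₁ : β₁ - α₁ < π) (hw₂ : β₂ - α₂ < π)
    (hsum : β₁ + β₂ < π) (hsum' : -π < α₁ + α₂)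
    (A B : Matrix (Fin n) (Fin n) ℂ)
    (hA : ∀ x : EuclideanSpace ℂ (Fin n), ‖x‖ = 1 → star x ⬝ᵥ A.mulVec x ∈ sector α₁ β₁)
    (hB : ∀ x : EuclideanSpace ℂ (Fin n), ‖x‖ = 1 → star x ⬝ᵥ B.mulVec x ∈ sector α₂ β₂) :
    (1 + A * B).det ≠ 0 := by
  intro hdet
  obtain ⟨x, hx0, hx⟩ := (Matrix.exists_mulVec_eq_zero_iff).2 hdet
  set y := B.mulVec x with hy
  have hAy : A.mulVec y = -x := by
    have : x + A.mulVec y = 0 := by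
      rw [hy, Matrix.mulVec_mulVec]
      simpa [Matrix.add_mulVec, Matrix.one_mulVec] using hx
    linear_combination (norm := module) this
  have hy0 : y ≠ 0 := by
    intro h
    apply hx0
    have := hAy
    rw [h, Matrix.mulVec_zero] at this
    simpa using this.symm
  obtain ⟨c, hc, hca⟩ := normalized_sector A hA y hy0
  obtain ⟨d, hd, hdb⟩ := normalized_sector B hB x hx0
  -- star y ⬝ᵥ x = conj (star x ⬝ᵥ y)
  have hdot : star y ⬝ᵥ x = (starRingEnd ℂ) (star x ⬝ᵥ y) := by
    simp [dotProduct, map_sum, mul_comm, Pi.star_apply, RCLike.star_def]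
  have hQ : star y ⬝ᵥ A.mulVec y = -(starRingEnd ℂ) (star x ⬝ᵥ B.mulVec x) := by
    rw [hAy, ← hy, dotProduct_neg, hdot]
  refine sector_key hsum hsum' hca hdb (t := c / d) (div_pos hc hd) ?_
  have hd0 : (d : ℂ) ≠ 0 := by exact_mod_cast hd.ne'
  rw [hQ, _root_.map_mul]
  simp only [Complex.conj_ofReal]
  push_cast
  field_simp
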